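/- For every structure A and every k > 1, the periodic power A^per is isomorphic to the k-th direct power (A^per)^k of itself. -/
import Mathlib


open FirstOrder FirstOrder.Language FirstOrder.Language.Structure Function

universe u v w

/-- Componentwise structure on a Pi type. -/
instance piStructure {L : Language} {ι : Type*} (M : ι → Type*)
    [∀ i, L.Structure (M i)] : L.Structure (∀ i, M i) where
  funMap f x i := funMap f fun j => x j i
  RelMap r x := ∀ i, RelMap r fun j => x j i

/-- Componentwise structure on a binary product. -/
instance prodStructure {L : Language} {M N : Type*} [L.Structure M] [L.Structure N] :
    L.Structure (M × N) where
  funMap f x := (funMap f fun i => (x i).1, funMap f fun i => (x i).2)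
  RelMap r x := RelMap r (fun i => (x i).1) ∧ RelMap r fun i => (x i).2

/-- `a : ℕ → A` is `k`-periodic: `k > 0` and `a i = a (i % k)` for all `i`. -/
def IsPeriodicWith {A : Type*} (a : ℕ → A) (k : ℕ) : Prop :=
  0 < k ∧ ∀ i, a i = a (i % k)

/-- `a : ℕ → A` is periodic if it is `k`-periodic for some `k > 0`. -/
def IsPeriodic {A : Type*} (a : ℕ → A) : Prop :=
  ∃ k, IsPeriodicWith a k

theorem isPeriodicWith_of_dvd {A : Type*} {a : ℕ → A} {k m : ℕ}
    (h : IsPeriodicWith a k) (hm : 0 < m) (hd : k ∣ m) : IsPeriodicWith a m :=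
  ⟨hm, fun i => by rw [h.2 i, h.2 (i % m), Nat.mod_mod_of_dvd i hd]⟩

/-- The set of periodic functions as a substructure of the direct power `A^ℕ`. -/
def periodicSubstructure (L : Language) (A : Type w) [L.Structure A] :
    L.Substructure (ℕ → A) where
  carrier := {a | IsPeriodic a}
  fun_mem := by
    intro n f x hx
    choose k hk using hx
    refine ⟨∏ j, k j, Finset.prod_pos fun j _ => (hk j).1, fun i => ?_⟩
    show funMap f (fun j => x j i) = funMap f (fun j => x j (i % ∏ j, k j))
    congr 1
    funext j
    exact (isPeriodicWith_of_dvd (hk j) (Finset.prod_pos fun j _ => (hk j).1)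
      (Finset.dvd_prod_of_mem k (Finset.mem_univ j))).2 i

/-- The `k`-periodic sequence `⟨x 0 ⋯ x (k-1)⟩`. -/
def perSeq {A : Type*} (k : ℕ) (hk : 0 < k) (x : Fin k → A) : ℕ → A :=
  fun i => x ⟨i % k, Nat.mod_lt i hk⟩

theorem perSeq_mem {L : Language} {A : Type w} [L.Structure A]
    (k : ℕ) (hk : 0 < k) (x : Fin k → A) : perSeq k hk x ∈ periodicSubstructure L A :=
  ⟨k, hk, fun i => congrArg x (Fin.ext (Nat.mod_mod_of_dvd i dvd_rfl).symm)⟩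

/-- The canonical embedding map `A^k → A^per` on elements. -/
def ekPer {L : Language} {A : Type w} [L.Structure A] (k : ℕ) (hk : 0 < k)
    (x : Fin k → A) : periodicSubstructure L A :=
  ⟨perSeq k hk x, perSeq_mem k hk x⟩

/-- Positive Horn formulas: built from atomic formulas using `∧`, `∃`, `∀`. -/
inductive IsPositiveHorn {L : Language} {α : Type*} :
    ∀ {n : ℕ}, L.BoundedFormula α n → Prop
  | equal {n} (t₁ t₂ : L.Term (α ⊕ Fin n)) : IsPositiveHorn (t₁.bdEqual t₂)
  | rel {n ℓ} (R : L.Relations ℓ) (ts : Fin ℓ → L.Term (α ⊕ Fin n)) :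
      IsPositiveHorn (R.boundedFormula ts)
  | inf {n} {φ ψ : L.BoundedFormula α n} :
      IsPositiveHorn φ → IsPositiveHorn ψ → IsPositiveHorn (φ ⊓ ψ)
  | ex {n} {φ : L.BoundedFormula α (n + 1)} : IsPositiveHorn φ → IsPositiveHorn φ.ex
  | all {n} {φ : L.BoundedFormula α (n + 1)} : IsPositiveHorn φ → IsPositiveHorn φ.all

/-- Primitive positive formulas: built from atomic formulas using `∧` and `∃`. -/
inductive IsPrimitivePositive {L : Language} {α : Type*} :
    ∀ {n : ℕ}, L.BoundedFormula α n → Prop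
  | equal {n} (t₁ t₂ : L.Term (α ⊕ Fin n)) : IsPrimitivePositive (t₁.bdEqual t₂)
  | rel {n ℓ} (R : L.Relations ℓ) (ts : Fin ℓ → L.Term (α ⊕ Fin n)) :
      IsPrimitivePositive (R.boundedFormula ts)
  | inf {n} {φ ψ : L.BoundedFormula α n} :
      IsPrimitivePositive φ → IsPrimitivePositive ψ → IsPrimitivePositive (φ ⊓ ψ)
  | ex {n} {φ : L.BoundedFormula α (n + 1)} : IsPrimitivePositive φ → IsPrimitivePositive φ.ex

/-- A periomorphism `h` preserves an `ℓ`-ary relation `R` over `A`. -/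
def PreservesPer {L : Language} {A : Type w} [L.Structure A] {ℓ : ℕ}
    (h : periodicSubstructure L A →[L] A) (R : Set (Fin ℓ → A)) : Prop :=
  ∀ c : Fin ℓ → periodicSubstructure L A,
    (∀ i : ℕ, (fun j => (c j : ℕ → A) i) ∈ R) → (fun j => h (c j)) ∈ R

/-- A finitary operation `g : A^k → A` preserves an `ℓ`-ary relation `R` over `A`. -/
def PreservesOp {A : Type*} {k ℓ : ℕ} (g : (Fin k → A) → A) (R : Set (Fin ℓ → A)) : Prop :=
  ∀ a : Fin k → Fin ℓ → A, (∀ i, a i ∈ R) → (fun j => g fun i => a i j) ∈ R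

/-- for `k > 1`, `A^per ≅ (A^per)^k`. -/
theorem periodic_congr {A : Type*} {a : ℕ → A} {p : ℕ} (h : IsPeriodicWith a p)
    {m n : ℕ} (hmn : m % p = n % p) : a m = a n := by
  rw [h.2 m, h.2 n, hmn]

theorem stmt_11 {L : Language} {A : Type*} [L.Structure A] (k : ℕ) (hk : 1 < k) :
    Nonempty (periodicSubstructure L A ≃[L] (Fin k → periodicSubstructure L A)) := by
  have hk0 : 0 < k := Nat.lt_of_lt_of_le Nat.one_pos hk.le
  -- forward map
  have toMem : ∀ (a : periodicSubstructure L A) (j : Fin k),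
      IsPeriodic (fun i => (a : ℕ → A) (k * i + j)) := by
    rintro ⟨a, p, hp⟩ j
    exact ⟨p, hp.1, fun i => periodic_congr hp
      ((((Nat.mod_modEq i p).mul_left k).add_right (j : ℕ)).symm)⟩
  set F : periodicSubstructure L A → (Fin k → periodicSubstructure L A) :=
    fun a j => ⟨fun i => (a : ℕ → A) (k * i + j), toMem a j⟩ with hF
  -- inverse map
  have invMem : ∀ b : Fin k → periodicSubstructure L A,
      IsPeriodic (fun n => (b ⟨n % k, Nat.mod_lt n hk0⟩ : ℕ → A) (n / k)) := by
    intro b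
    have hmem : ∀ j, IsPeriodic ((b j : ℕ → A)) := fun j => (b j).2
    choose p hp using hmem
    have hP : 0 < ∏ j, p j := Finset.prod_pos fun j _ => (hp j).1
    have hpP : ∀ j, IsPeriodicWith ((b j : ℕ → A)) (∏ j, p j) := fun j =>
      isPeriodicWith_of_dvd (hp j) hP (Finset.dvd_prod_of_mem p (Finset.mem_univ j))
    refine ⟨k * ∏ j, p j, Nat.mul_pos hk0 hP, fun n => ?_⟩
    have h1 : n % (k * ∏ j, p j) % k = n % k :=
      Nat.mod_mod_of_dvd n (Dvd.intro _ rfl)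
    have h2 : n % (k * ∏ j, p j) / k = n / k % ∏ j, p j :=
      Nat.mod_mul_right_div_self n k _
    show (b ⟨n % k, _⟩ : ℕ → A) (n / k) = (b ⟨n % (k * ∏ j, p j) % k, _⟩ : ℕ → A) _
    have : (⟨n % (k * ∏ j, p j) % k, Nat.mod_lt _ hk0⟩ : Fin k) = ⟨n % k, Nat.mod_lt n hk0⟩ :=
      Fin.ext h1
    rw [this, h2]
    exact periodic_congr (hpP _) (by rw [Nat.mod_mod_of_dvd _ dvd_rfl])
  set G : (Fin k → periodicSubstructure L A) → periodicSubstructure L A :=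
    fun b => ⟨fun n => (b ⟨n % k, Nat.mod_lt n hk0⟩ : ℕ → A) (n / k), invMem b⟩ with hG
  refine ⟨⟨⟨F, G, ?_, ?_⟩, ?_, ?_⟩⟩
  · intro a
    apply Subtype.ext; funext n
    show (a : ℕ → A) (k * (n / k) + n % k) = (a : ℕ → A) n
    rw [Nat.div_add_mod]
  · intro b
    funext j
    apply Subtype.ext; funext i
    show (b ⟨(k * i + j) % k, _⟩ : ℕ → A) ((k * i + j) / k) = (b j : ℕ → A) i
    have h1 : (k * i + (j : ℕ)) % k = j := by
      rw [Nat.mul_add_mod, Nat.mod_eq_of_lt j.2]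
    have h2 : (k * i + (j : ℕ)) / k = i := by
      rw [Nat.mul_add_div hk0, Nat.div_eq_of_lt j.2, Nat.add_zero]
    have : (⟨(k * i + (j : ℕ)) % k, Nat.mod_lt _ hk0⟩ : Fin k) = j := Fin.ext h1
    rw [this, h2]
  · intro m f x
    funext j
    apply Subtype.ext; funext i
    rfl
  · intro m r x
    constructor
    · intro h i
      have e : (fun j => (x j : ℕ → A) i)
          = fun j => ((F (x j)) ⟨i % k, Nat.mod_lt i hk0⟩ : ℕ → A) (i / k) := by
        funext j
        show _ = (x j : ℕ → A) (k * (i / k) + i % k)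
        rw [Nat.div_add_mod]
      rw [e]
      exact h ⟨i % k, Nat.mod_lt i hk0⟩ (i / k)
    · intro h j i
      exact h (k * i + j)
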